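/- Let x : ℕ → ℕ (indexed from 1) be strictly increasing, n ≥ 1, f a non-decreasing x-parking function of length n, and I a set of pairs. Suppose the set P = {p : p is a primitive x-parking function of length n with p(i) ≥ f(i) for all i and inv(p) = I} is nonempty, and let D = max{d(p) : p ∈ P}. Then Σ_{p ∈ P} t^{d(p)} = (1 + t)^{D} in ℤ[t]; equivalently, for every 0 ≤ j ≤ D, the number of p ∈ P with d(p) = D − j equals the binomial coefficient C(D, j). -/
import Mathlib

def IsPF (x : ℕ → ℕ) {n : ℕ} (f : Fin n → ℕ) : Prop :=
  (∀ i, 1 ≤ f i) ∧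
  ∀ k, 1 ≤ k → k ≤ n → k ≤ (Finset.univ.filter (fun i => f i ≤ x k)).card

/-- A primitive `x`-parking function: every value `v` in the image satisfies
`v = x(1 + #{i : p i < v})`. -/
def IsPrimitive (x : ℕ → ℕ) {n : ℕ} (p : Fin n → ℕ) : Prop :=
  IsPF x p ∧ ∀ v ∈ Set.range p,
    v = x (1 + (Finset.univ.filter (fun i => p i < v)).card)

/-- The dimension `d(p) = n - #(image of p)` of a parking function. -/
def pdim {n : ℕ} (p : Fin n → ℕ) : ℕ := n - (Finset.univ.image p).card

/-- The inversion set `inv(p) = {(i,j) : i < j and p(i) ≥ p(j)}`. -/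
def inversions {n : ℕ} (p : Fin n → ℕ) : Set (Fin n × Fin n) :=
  {q | q.1 < q.2 ∧ p q.2 ≤ p q.1}

namespace PPX


/-- block start function: `st S k` = least `l ≤ k` with all gaps `[l, k) ⊆ S`. -/
def st (S : Finset ℕ) : ℕ → ℕ
  | 0 => 0
  | k+1 => if k ∈ S then st S k else k+1

lemma st_le (S : Finset ℕ) (k : ℕ) : st S k ≤ k := by
  induction k with
  | zero => simp [st]
  | succ k ih => unfold st; split <;> omega

lemma st_succ_of_mem {S : Finset ℕ} {k : ℕ} (h : k ∈ S) : st S (k+1) = st S k := by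
  simp [st, h]

lemma st_succ_of_notMem {S : Finset ℕ} {k : ℕ} (h : k ∉ S) : st S (k+1) = k+1 := by
  simp [st, h]

lemma st_mono (S : Finset ℕ) : Monotone (st S) := by
  apply monotone_nat_of_le_succ
  intro k
  by_cases h : k ∈ S
  · rw [st_succ_of_mem h]
  · rw [st_succ_of_notMem h]; exact (st_le S k).trans (by omega)

lemma st_mem (S : Finset ℕ) : ∀ l m, st S l ≤ m → m < l → m ∈ S := by
  intro l
  induction l with
  | zero => omega
  | succ l ih =>
    intro m h1 h2
    by_cases hl : l ∈ S
    · rw [st_succ_of_mem hl] at h1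
      rcases Nat.lt_or_ge m l with h3 | h3
      · exact ih m h1 h3
      · have : m = l := by omega
        exact this ▸ hl
    · rw [st_succ_of_notMem hl] at h1; omega

lemma st_gt {S : Finset ℕ} {m l : ℕ} (h1 : m < l) (h2 : m ∉ S) : m < st S l := by
  by_contra h
  exact h2 (st_mem S l m (by omega) h1)

lemma st_idem (S : Finset ℕ) (k : ℕ) : st S (st S k) = st S k := by
  induction k with
  | zero => simp [st]
  | succ k ih =>
    by_cases h : k ∈ S
    · rw [st_succ_of_mem h, ih]
    · rw [st_succ_of_notMem h, st_succ_of_notMem h]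

lemma st_congr (S : Finset ℕ) : ∀ l k, k ≤ l → (∀ m, k ≤ m → m < l → m ∈ S) →
    st S k = st S l := by
  intro l
  induction l with
  | zero => intro k h _; interval_cases k; rfl
  | succ l ih =>
    intro k hk hm
    rcases Nat.lt_or_ge k (l+1) with h1 | h1
    · rw [st_succ_of_mem (hm l (by omega) (by omega))]
      exact ih k (by omega) (fun m hm1 hm2 => hm m hm1 (by omega))
    · have : k = l + 1 := by omega
      rw [this]

/-- strict monotonicity of x above 1 -/
lemma xlt {x : ℕ → ℕ} (hx : ∀ m, 1 ≤ m → x m < x (m+1)) :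
    ∀ {a b : ℕ}, 1 ≤ a → a < b → x a < x b := by
  intro a b ha h
  induction b with
  | zero => omega
  | succ b ih =>
    rcases Nat.lt_or_ge a b with h' | h'
    · exact (ih h').trans (hx b (by omega))
    · have : a = b := by omega
      subst this; exact hx a ha

lemma xle {x : ℕ → ℕ} (hx : ∀ m, 1 ≤ m → x m < x (m+1)) :
    ∀ {a b : ℕ}, 1 ≤ a → a ≤ b → x a ≤ x b := by
  intro a b ha h
  rcases Nat.lt_or_ge a b with h' | h'
  · exact (xlt hx ha h').le
  · have : a = b := by omega
    rw [this]

lemma xinj {x : ℕ → ℕ} (hx : ∀ m, 1 ≤ m → x m < x (m+1)) {a b : ℕ}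
    (ha : 1 ≤ a) (hb : 1 ≤ b) (h : x a = x b) : a = b := by
  rcases lt_trichotomy a b with h' | h' | h'
  · exact absurd h (xlt hx ha h').ne
  · exact h'
  · exact absurd h.symm (xlt hx hb h').ne

lemma enc_lt {n a b r r' : ℕ} (hr : r < n) (hr' : r' < n) :
    a * n + r < b * n + r' ↔ a < b ∨ (a = b ∧ r < r') := by
  constructor
  · intro h
    rcases lt_trichotomy a b with h1 | h1 | h1
    · exact Or.inl h1
    · exact Or.inr ⟨h1, by subst h1; omega⟩
    · exfalso
      have h2 : (b + 1) * n ≤ a * n := Nat.mul_le_mul_right n h1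
      rw [add_mul, one_mul] at h2
      omega
  · rintro (h1 | ⟨h1, h2⟩)
    · have h2 : (a + 1) * n ≤ b * n := Nat.mul_le_mul_right n h1
      rw [add_mul, one_mul] at h2
      omega
    · subst h1; omega



section

variable {n : ℕ}

/-- `σ` as a function `ℕ → ℕ`. -/
def sv (σ : Equiv.Perm (Fin n)) (k : ℕ) : ℕ := if h : k < n then (σ ⟨k, h⟩ : ℕ) else 0

/-- The parking function associated to a subset `S` of gap positions. -/
def pfun (x : ℕ → ℕ) (σ : Equiv.Perm (Fin n)) (S : Finset ℕ) : Fin n → ℕ :=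
  fun i => x (1 + st S ((σ.symm i : Fin n) : ℕ))

lemma sv_lt (σ : Equiv.Perm (Fin n)) {k : ℕ} (h : k < n) : sv σ k < n := by
  simp only [sv, dif_pos h]
  exact (σ ⟨k, h⟩).isLt

lemma pfun_apply (x : ℕ → ℕ) (σ : Equiv.Perm (Fin n)) (S : Finset ℕ) {k : ℕ} (h : k < n) :
    pfun x σ S (σ ⟨k, h⟩) = x (1 + st S k) := by
  simp [pfun]

lemma sv_apply_symm (σ : Equiv.Perm (Fin n)) (i : Fin n) :
    sv σ ((σ.symm i : Fin n) : ℕ) = (i : ℕ) := by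
  simp only [sv, dif_pos (σ.symm i).isLt]
  congr 1
  simp [Fin.eta]

lemma sv_inj (σ : Equiv.Perm (Fin n)) {k l : ℕ} (hk : k < n) (hl : l < n)
    (h : sv σ k = sv σ l) : k = l := by
  simp only [sv, dif_pos hk, dif_pos hl] at h
  have h2 : σ ⟨k, hk⟩ = σ ⟨l, hl⟩ := Fin.ext h
  have := σ.injective h2
  exact congrArg Fin.val this

end



lemma chain_congr {g : ℕ → ℕ} : ∀ l k, k ≤ l → (∀ m, k ≤ m → m < l → g (m+1) = g m) →
    g k = g l := by
  intro l
  induction l with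
  | zero => intro k h _; interval_cases k; rfl
  | succ l ih =>
    intro k hk hm
    rcases Nat.lt_or_ge k (l+1) with h1 | h1
    · rw [hm l (by omega) (by omega)]
      exact ih k (by omega) (fun m hm1 hm2 => hm m hm1 (by omega))
    · have : k = l + 1 := by omega
      rw [this]

/-- strictly decreasing chain -/
lemma chain_lt {g : ℕ → ℕ} : ∀ l k, k < l → (∀ m, k ≤ m → m < l → g (m+1) < g m) →
    g l < g k := by
  intro l
  induction l with
  | zero => omega
  | succ l ih =>
    intro k hk hm
    rcases Nat.lt_or_ge k l with h1 | h1
    · exact (hm l (by omega) (by omega)).trans (ih k h1 (fun m hm1 hm2 => hm m hm1 (by omega)))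
    · have hkl : k = l := by omega
      rw [hkl]
      exact hm l (by omega) (by omega)

variable {n : ℕ}

lemma card_filter_val_lt (s : ℕ) (hs : s ≤ n) :
    (Finset.univ.filter (fun k : Fin n => (k : ℕ) < s)).card = s := by
  have himg : (Finset.univ.filter (fun k : Fin n => (k : ℕ) < s)).image
      (fun k : Fin n => (k : ℕ)) = Finset.range s := by
    ext j
    simp only [Finset.mem_image, Finset.mem_filter, Finset.mem_univ, true_and, Finset.mem_range]
    constructor
    · rintro ⟨k, hk, rfl⟩; exact hk
    · intro hj; exact ⟨⟨j, by omega⟩, hj, rfl⟩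
  have h2 := Finset.card_image_of_injective
    (Finset.univ.filter (fun k : Fin n => (k : ℕ) < s)) Fin.val_injective
  rw [himg, Finset.card_range] at h2
  exact h2.symm

lemma card_filter_perm (σ : Equiv.Perm (Fin n)) (P : Fin n → Prop) [DecidablePred P] :
    (Finset.univ.filter (fun i => P (σ.symm i))).card = (Finset.univ.filter P).card := by
  have himg : (Finset.univ.filter (fun i => P (σ.symm i))).image σ.symm
      = Finset.univ.filter P := by
    ext j
    simp only [Finset.mem_image, Finset.mem_filter, Finset.mem_univ, true_and]
    constructor
    · rintro ⟨i, hi, rfl⟩; exact hi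
    · intro hj; exact ⟨σ j, by simpa using hj, by simp⟩
  have h2 := Finset.card_image_of_injective
    (Finset.univ.filter (fun i => P (σ.symm i))) σ.symm.injective
  rw [himg] at h2
  exact h2.symm


variable {n : ℕ}

lemma st_start (S : Finset ℕ) (k : ℕ) : st S k = 0 ∨ (st S k - 1) ∉ S := by
  induction k with
  | zero => left; rfl
  | succ k ih =>
    by_cases h : k ∈ S
    · rw [st_succ_of_mem h]; exact ih
    · rw [st_succ_of_notMem h]; right; simpa using h

section Desc

variable (σ : Equiv.Perm (Fin n)) {S : Finset ℕ}
variable (hdesc : ∀ a ∈ S, a + 1 < n ∧ sv σ (a+1) < sv σ a)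

include hdesc

lemma desc_lt {k l : ℕ} (h : k < l) (hb : ∀ m, k ≤ m → m < l → m ∈ S) :
    sv σ l < sv σ k :=
  chain_lt l k h (fun m h1 h2 => (hdesc m (hb m h1 h2)).2)

lemma desc_le {k l : ℕ} (h : k ≤ l) (hb : ∀ m, k ≤ m → m < l → m ∈ S) :
    sv σ l ≤ sv σ k := by
  rcases Nat.lt_or_ge k l with h1 | h1
  · exact (desc_lt σ hdesc h1 hb).le
  · have : k = l := by omega
    rw [this]

end Desc

section Main

variable (x : ℕ → ℕ) (σ : Equiv.Perm (Fin n)) (S : Finset ℕ)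
variable (hx : ∀ m, 1 ≤ m → x m < x (m + 1)) (hx1 : 1 ≤ x 1)

include hx

/-- key membership computation: the count of entries smaller than the value at
sorted position `k` is `st S k`. -/
lemma pfun_count {k : ℕ} (hk : k < n) :
    (Finset.univ.filter (fun i => pfun x σ S i < pfun x σ S (σ ⟨k, hk⟩))).card
      = st S k := by
  have hsk := st_le S k
  have heq : (Finset.univ.filter (fun i => pfun x σ S i < pfun x σ S (σ ⟨k, hk⟩)))
      = Finset.univ.filter (fun i => ((σ.symm i : Fin n) : ℕ) < st S k) := by
    ext i
    simp only [Finset.mem_filter, Finset.mem_univ, true_and]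
    rw [pfun_apply x σ S hk]
    unfold pfun
    set l := ((σ.symm i : Fin n) : ℕ) with hl
    constructor
    · intro h
      by_contra hc
      push_neg at hc
      have h1 : st S (st S k) ≤ st S l := st_mono S hc
      rw [st_idem] at h1
      exact absurd (xle hx (by omega) (by omega) : x (1 + st S k) ≤ x (1 + st S l))
        (by omega)
    · intro h
      exact xlt hx (by omega) (by have := st_le S l; omega)
  rw [heq, card_filter_perm σ (fun j : Fin n => (j : ℕ) < st S k),
    card_filter_val_lt (st S k) (by omega)]

include hx1

lemma pfun_isPrimitive (hn : 1 ≤ n) : IsPrimitive x (pfun x σ S) := by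
  constructor
  · constructor
    · intro i
      have : 1 ≤ x (1 + st S ((σ.symm i : Fin n) : ℕ)) :=
        le_trans hx1 (xle hx le_rfl (by omega))
      exact this
    · intro k hk1 hkn
      have hsub : Finset.univ.filter (fun i => ((σ.symm i : Fin n) : ℕ) < k)
          ⊆ Finset.univ.filter (fun i => pfun x σ S i ≤ x k) := by
        intro i hi
        simp only [Finset.mem_filter, Finset.mem_univ, true_and] at hi ⊢
        have hst := st_le S ((σ.symm i : Fin n) : ℕ)
        exact xle hx (by omega) (by omega)
      have hcard : (Finset.univ.filter (fun i => ((σ.symm i : Fin n) : ℕ) < k)).card = k := by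
        rw [card_filter_perm σ (fun j : Fin n => (j : ℕ) < k), card_filter_val_lt k hkn]
      calc k = _ := hcard.symm
        _ ≤ _ := Finset.card_le_card hsub
  · rintro v ⟨i, rfl⟩
    have hk : ((σ.symm i : Fin n) : ℕ) < n := (σ.symm i).isLt
    have hi : σ ⟨((σ.symm i : Fin n) : ℕ), hk⟩ = i := by
      simp [Fin.eta]
    rw [← hi, pfun_count x σ S hx hk, pfun_apply x σ S hk]

end Main

section Main2

variable (x : ℕ → ℕ) (σ : Equiv.Perm (Fin n)) (S : Finset ℕ)
variable (hx : ∀ m, 1 ≤ m → x m < x (m + 1))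
variable (hdesc : ∀ a ∈ S, a + 1 < n ∧ sv σ (a+1) < sv σ a)

include hx hdesc

lemma pfun_ge (f : Fin n → ℕ) (hfmono : Monotone f)
    (hstar : ∀ (k : ℕ) (h : k < n), f (σ ⟨k, h⟩) ≤ x (k + 1)) :
    ∀ i, f i ≤ pfun x σ S i := by
  intro i
  set k := ((σ.symm i : Fin n) : ℕ) with hkdef
  have hk : k < n := (σ.symm i).isLt
  set s := st S k with hsdef
  have hs : s ≤ k := st_le S k
  have hsn : s < n := by omega
  have hblock : ∀ m, s ≤ m → m < k → m ∈ S := fun m h1 h2 => st_mem S k m h1 h2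
  have hsv : sv σ k ≤ sv σ s := desc_le σ hdesc hs hblock
  have h1 : (i : ℕ) = sv σ k := (sv_apply_symm σ i).symm
  have h2 : sv σ s = ((σ ⟨s, hsn⟩ : Fin n) : ℕ) := by simp [sv, hsn]
  have hfle : f i ≤ f (σ ⟨s, hsn⟩) := by
    apply hfmono
    rw [Fin.le_def]
    omega
  calc f i ≤ f (σ ⟨s, hsn⟩) := hfle
    _ ≤ x (s + 1) := hstar s hsn
    _ = x (1 + s) := by rw [Nat.add_comm]
    _ = pfun x σ S i := rfl

lemma pfun_inversions (p₀ : Fin n → ℕ)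
    (hkey : ∀ (k l : ℕ) (hk : k < n) (hl : l < n), k < l →
      p₀ (σ ⟨k, hk⟩) < p₀ (σ ⟨l, hl⟩) ∨
      (p₀ (σ ⟨k, hk⟩) = p₀ (σ ⟨l, hl⟩) ∧ sv σ l < sv σ k)) :
    inversions (pfun x σ S) = inversions p₀ := by
  have main : ∀ i j : Fin n, i < j → (pfun x σ S j ≤ pfun x σ S i ↔ p₀ j ≤ p₀ i) := by
    intro i j hij
    set k := ((σ.symm i : Fin n) : ℕ) with hkdef
    set l := ((σ.symm j : Fin n) : ℕ) with hldef
    have hk : k < n := (σ.symm i).isLt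
    have hl : l < n := (σ.symm j).isLt
    have hi : σ ⟨k, hk⟩ = i := by simp [hkdef, Fin.eta]
    have hj : σ ⟨l, hl⟩ = j := by simp [hldef, Fin.eta]
    have hsvk : sv σ k = (i : ℕ) := sv_apply_symm σ i
    have hsvl : sv σ l = (j : ℕ) := sv_apply_symm σ j
    have hij' : (i : ℕ) < (j : ℕ) := Fin.lt_def.mp hij
    have hkl : k ≠ l := by
      intro h
      rw [h] at hsvk
      omega
    rcases Nat.lt_or_ge k l with hc | hc
    · have hh := hkey k l hk hl hc
      rw [hi, hj] at hh
      rcases hh with h1 | ⟨h1, h2⟩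
      · constructor
        · intro hle
          exfalso
          have hstlt : st S k < st S l := by
            by_contra hcon
            push_neg at hcon
            have hkk := st_le S k
            have hblock : ∀ m, k ≤ m → m < l → m ∈ S := fun m hm1 hm2 =>
              st_mem S l m (by omega) hm2
            have := desc_lt σ hdesc hc hblock
            omega
          have hlt : pfun x σ S i < pfun x σ S j := by
            show x (1 + st S k) < x (1 + st S l)
            exact xlt hx (by omega) (by omega)
          omega
        · intro hle
          exact absurd h1 (not_lt.mpr hle)
      · exfalso
        omega
    · have hc' : l < k := by omega
      have hh := hkey l k hl hk hc'
      rw [hi, hj] at hh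
      have hRHS : p₀ j ≤ p₀ i := by
        rcases hh with h1 | ⟨h1, _⟩
        · exact h1.le
        · exact le_of_eq h1
      have hLHS : pfun x σ S j ≤ pfun x σ S i := by
        show x (1 + st S l) ≤ x (1 + st S k)
        have := st_mono S (hc'.le)
        exact xle hx (by omega) (by omega)
      exact iff_of_true hLHS hRHS
  ext q
  obtain ⟨i, j⟩ := q
  simp only [inversions, Set.mem_setOf_eq]
  constructor
  · rintro ⟨h1, h2⟩
    exact ⟨h1, (main i j h1).mp h2⟩
  · rintro ⟨h1, h2⟩
    exact ⟨h1, (main i j h1).mpr h2⟩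

end Main2

section Rep

variable (x : ℕ → ℕ) (σ : Equiv.Perm (Fin n))

/-- the value sequence of `p` in sorted position order -/
def pv (p : Fin n → ℕ) (k : ℕ) : ℕ := if h : k < n then p (σ ⟨k, h⟩) else 0

/-- the plateau (gap) set of `p` -/
def plat (p : Fin n → ℕ) : Finset ℕ :=
  (Finset.range (n-1)).filter (fun a => pv σ p (a+1) = pv σ p a)

variable (hx : ∀ m, 1 ≤ m → x m < x (m + 1)) (p₀ p : Fin n → ℕ)
variable (hkey : ∀ (k l : ℕ) (hk : k < n) (hl : l < n), k < l →
      p₀ (σ ⟨k, hk⟩) < p₀ (σ ⟨l, hl⟩) ∨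
      (p₀ (σ ⟨k, hk⟩) = p₀ (σ ⟨l, hl⟩) ∧ sv σ l < sv σ k))
variable (hI : inversions p = inversions p₀)

include hkey hI

lemma rep_cmp : ∀ (k l : ℕ) (hk : k < n) (hl : l < n), k < l →
    pv σ p k ≤ pv σ p l ∧ (sv σ k < sv σ l → pv σ p k < pv σ p l) := by
  intro k l hk hl hkl
  have hIiff := Set.ext_iff.mp hI
  set i := σ ⟨k, hk⟩ with hidef
  set j := σ ⟨l, hl⟩ with hjdef
  have hpvk : pv σ p k = p i := by simp [pv, hk, hidef]
  have hpvl : pv σ p l = p j := by simp [pv, hl, hjdef]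
  have hsvk : sv σ k = (i : ℕ) := by simp [sv, hk, hidef]
  have hsvl : sv σ l = (j : ℕ) := by simp [sv, hl, hjdef]
  have hne : (i : ℕ) ≠ (j : ℕ) := by
    intro h
    exact absurd (sv_inj σ hk hl (by omega)) (by omega)
  have hh := hkey k l hk hl hkl
  rw [← hidef, ← hjdef] at hh
  rcases Nat.lt_or_ge (i : ℕ) (j : ℕ) with hij | hij
  · -- i < j as Fin
    have hij2 : i < j := Fin.lt_def.mpr hij
    have h1 : p₀ i < p₀ j := by
      rcases hh with h1 | ⟨_, h2⟩
      · exact h1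
      · omega
    have hnotinv : (i, j) ∉ inversions p₀ := by
      intro hmem
      simp only [inversions, Set.mem_setOf_eq] at hmem
      omega
    have hnotinv' : (i, j) ∉ inversions p := hI ▸ hnotinv
    simp only [inversions, Set.mem_setOf_eq, not_and, not_le] at hnotinv'
    have := hnotinv' hij2
    constructor
    · omega
    · intro _; omega
  · have hij2 : j < i := Fin.lt_def.mpr (by omega)
    have h1 : p₀ i ≤ p₀ j := by
      rcases hh with h1 | ⟨h2, _⟩
      · exact h1.le
      · exact le_of_eq h2
    have hinv : (j, i) ∈ inversions p₀ := by
      simp only [inversions, Set.mem_setOf_eq]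
      exact ⟨hij2, h1⟩
    have hinv' : (j, i) ∈ inversions p := hI ▸ hinv
    simp only [inversions, Set.mem_setOf_eq] at hinv'
    constructor
    · omega
    · intro h
      omega

lemma rep_desc : ∀ a ∈ plat σ p, a + 1 < n ∧ sv σ (a+1) < sv σ a := by
  intro a ha
  simp only [plat, Finset.mem_filter, Finset.mem_range] at ha
  obtain ⟨ha1, ha2⟩ := ha
  have han : a + 1 < n := by omega
  refine ⟨han, ?_⟩
  have hne : sv σ a ≠ sv σ (a+1) := by
    intro h
    exact absurd (sv_inj σ (by omega) han h) (by omega)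
  rcases Nat.lt_or_ge (sv σ a) (sv σ (a+1)) with h | h
  · exfalso
    have := (rep_cmp σ p₀ p hkey hI a (a+1) (by omega) han (by omega)).2 h
    omega
  · omega

include hx

lemma rep_eq (hprim : IsPrimitive x p) : p = pfun x σ (plat σ p) := by
  funext i
  set k := ((σ.symm i : Fin n) : ℕ) with hkdef
  have hk : k < n := (σ.symm i).isLt
  have hi : σ ⟨k, hk⟩ = i := by simp [hkdef, Fin.eta]
  set s := st (plat σ p) k with hsdef
  have hsk : s ≤ k := st_le _ k
  have hmono : ∀ (a b : ℕ), a ≤ b → b < n → pv σ p a ≤ pv σ p b := by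
    intro a b hab hbn
    rcases Nat.lt_or_ge a b with h | h
    · exact (rep_cmp σ p₀ p hkey hI a b (by omega) hbn h).1
    · have : a = b := by omega
      rw [this]
  have hclaim : ∀ (l : ℕ), l < n → (pv σ p l < pv σ p k ↔ l < s) := by
    intro l hl
    constructor
    · intro h
      by_contra hcon
      push_neg at hcon
      -- s ≤ l : show pv k ≤ pv l
      have hsek : pv σ p s = pv σ p k := by
        apply chain_congr k s hsk
        intro m hm1 hm2
        have hmem : m ∈ plat σ p := st_mem _ k m hm1 hm2
        simp only [plat, Finset.mem_filter, Finset.mem_range] at hmem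
        exact hmem.2
      have := hmono s l hcon hl
      omega
    · intro h
      have hs1 : 1 ≤ s := by omega
      set m := s - 1 with hmdef
      have hms : m + 1 = s := by omega
      have hmn : m < n - 1 := by omega
      have hmnot : m ∉ plat σ p := by
        rcases st_start (plat σ p) k with h1 | h1
        · omega
        · rw [← hsdef] at h1
          simpa [hmdef] using h1
      have hneq : pv σ p (m+1) ≠ pv σ p m := by
        intro hcon
        exact hmnot (by simp only [plat, Finset.mem_filter, Finset.mem_range]; exact ⟨hmn, hcon⟩)
      have h1 : pv σ p l ≤ pv σ p m := hmono l m (by omega) (by omega)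
      have h2 : pv σ p m ≤ pv σ p (m+1) := hmono m (m+1) (by omega) (by omega)
      have h3 : pv σ p s ≤ pv σ p k := hmono s k hsk hk
      rw [hms] at h2 hneq
      omega
  -- use primitivity
  have hrange : p i ∈ Set.range p := ⟨i, rfl⟩
  have hcount : (Finset.univ.filter (fun i' => p i' < p i)).card = s := by
    have heq : (Finset.univ.filter (fun i' => p i' < p i))
        = Finset.univ.filter (fun i' => ((σ.symm i' : Fin n) : ℕ) < s) := by
      ext i'
      simp only [Finset.mem_filter, Finset.mem_univ, true_and]
      have hl : ((σ.symm i' : Fin n) : ℕ) < n := (σ.symm i').isLt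
      have hi' : σ ⟨((σ.symm i' : Fin n) : ℕ), hl⟩ = i' := by simp [Fin.eta]
      have e1 : pv σ p ((σ.symm i' : Fin n) : ℕ) = p i' := by
        simp only [pv, dif_pos hl]
        rw [hi']
      have e2 : pv σ p k = p i := by
        simp only [pv, dif_pos hk]
        rw [hi]
      rw [← e1, ← e2]
      exact hclaim _ hl
    rw [heq, card_filter_perm σ (fun j0 : Fin n => (j0 : ℕ) < s),
      card_filter_val_lt s (by omega)]
  have hprim2 := hprim.2 (p i) hrange
  rw [hcount] at hprim2
  show p i = x (1 + s)
  exact hprim2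

end Rep

section Dim

variable (x : ℕ → ℕ) (σ : Equiv.Perm (Fin n)) (S : Finset ℕ)
variable (hx : ∀ m, 1 ≤ m → x m < x (m + 1))

include hx

lemma pfun_image (hS : S ⊆ Finset.range (n-1)) :
    Finset.univ.image (pfun x σ S)
      = ((Finset.range n) \ S.image (· + 1)).image (fun s => x (1 + s)) := by
  ext v
  simp only [Finset.mem_image, Finset.mem_univ, true_and, Finset.mem_sdiff, Finset.mem_range]
  constructor
  · rintro ⟨i, rfl⟩
    set k := ((σ.symm i : Fin n) : ℕ) with hkdef
    have hk : k < n := (σ.symm i).isLt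
    refine ⟨st S k, ⟨by have := st_le S k; omega, ?_⟩, rfl⟩
    intro hmem
    obtain ⟨a, ha, hab⟩ := hmem
    have h1 : st S (st S k) = st S k := st_idem S k
    rw [← hab, st_succ_of_mem ha] at h1
    have := st_le S a
    omega
  · rintro ⟨b, ⟨hb1, hb2⟩, rfl⟩
    refine ⟨σ ⟨b, hb1⟩, ?_⟩
    rw [pfun_apply x σ S hb1]
    congr 2
    -- st S b = b
    match b with
    | 0 => rfl
    | a + 1 =>
      have ha : a ∉ S := by
        intro hc
        exact hb2 ⟨a, hc, rfl⟩
      rw [st_succ_of_notMem ha]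

lemma pfun_pdim (hS : S ⊆ Finset.range (n-1)) : pdim (pfun x σ S) = S.card := by
  have hcard : S.card ≤ n - 1 := by
    have := Finset.card_le_card hS
    rwa [Finset.card_range] at this
  have himg : (S.image (· + 1)) ⊆ Finset.range n := by
    intro b hb
    simp only [Finset.mem_image] at hb
    obtain ⟨a, ha, rfl⟩ := hb
    have := hS ha
    simp only [Finset.mem_range] at this ⊢
    omega
  have hcard2 : (S.image (· + 1)).card = S.card :=
    Finset.card_image_of_injective S (fun a b => by omega)
  have hB : ((Finset.range n) \ S.image (· + 1)).card = n - S.card := by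
    rw [Finset.card_sdiff_of_subset himg, Finset.card_range, hcard2]
  have hinj : Set.InjOn (fun s => x (1 + s))
      (((Finset.range n) \ S.image (· + 1) : Finset ℕ) : Set ℕ) := by
    intro a _ b _ hab
    have := xinj hx (a := 1 + a) (b := 1 + b) (by omega) (by omega) hab
    omega
  rw [pdim, pfun_image x σ S hx hS, Finset.card_image_of_injOn hinj, hB]
  omega

lemma pfun_injective (S' : Finset ℕ) (hS : S ⊆ Finset.range (n-1))
    (hS' : S' ⊆ Finset.range (n-1)) (h : pfun x σ S = pfun x σ S') : S = S' := by
  have hst : ∀ k, k < n → st S k = st S' k := by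
    intro k hk
    have h2 := congrFun h (σ ⟨k, hk⟩)
    rw [pfun_apply x σ S hk, pfun_apply x σ S' hk] at h2
    have := xinj hx (a := 1 + st S k) (b := 1 + st S' k) (by omega) (by omega) h2
    omega
  have key : ∀ (T T' : Finset ℕ), T ⊆ Finset.range (n-1) →
      (∀ k, k < n → st T k = st T' k) → ∀ a ∈ T, a ∈ T' := by
    intro T T' hT hTT a ha
    have han : a < n - 1 := by
      have := hT ha
      rwa [Finset.mem_range] at this
    have h1 : st T (a+1) = st T a := st_succ_of_mem ha
    rw [hTT (a+1) (by omega), hTT a (by omega)] at h1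
    by_contra hc
    rw [st_succ_of_notMem hc] at h1
    have := st_le T' a
    omega
  apply Finset.Subset.antisymm
  · intro a ha; exact key S S' hS hst a ha
  · intro a ha; exact key S' S hS' (fun k hk => (hst k hk).symm) a ha

end Dim

end PPX

open PPX in
theorem primitive_dim_generating_function (x : ℕ → ℕ)
    (hx : ∀ m, 1 ≤ m → x m < x (m + 1)) (n : ℕ) (hn : 1 ≤ n)
    (f : Fin n → ℕ) (hfPF : IsPF x f) (hfMono : Monotone f)
    (I : Set (Fin n × Fin n)) (D : ℕ)
    (hD : ∃ p ∈ {p : Fin n → ℕ |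
        IsPrimitive x p ∧ (∀ i, f i ≤ p i) ∧ inversions p = I}, pdim p = D)
    (hDmax : ∀ p ∈ {p : Fin n → ℕ |
        IsPrimitive x p ∧ (∀ i, f i ≤ p i) ∧ inversions p = I}, pdim p ≤ D) :
    (∑ᶠ p ∈ {p : Fin n → ℕ |
        IsPrimitive x p ∧ (∀ i, f i ≤ p i) ∧ inversions p = I},
      (Polynomial.X : Polynomial ℤ) ^ pdim p) = (1 + Polynomial.X) ^ D ∧
    ∀ j ≤ D, Nat.card {p : Fin n → ℕ //
        (IsPrimitive x p ∧ (∀ i, f i ≤ p i) ∧ inversions p = I) ∧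
        pdim p = D - j} = D.choose j := by
  classical
  obtain ⟨p₀, hp₀, hp₀D⟩ := hD
  simp only [Set.mem_setOf_eq] at hp₀
  obtain ⟨hp₀prim, hp₀ge, hp₀inv⟩ := hp₀
  -- the sorting permutation
  set key : Fin n → ℕ := fun i => p₀ i * n + (n - 1 - (i : ℕ)) with hkeydef
  set σ : Equiv.Perm (Fin n) := Tuple.sort key with hσdef
  have hmono : Monotone (key ∘ σ) := Tuple.monotone_sort key
  have hkeyinj : Function.Injective key := by
    intro i j h
    simp only [hkeydef] at h
    have hi := i.isLt
    have hj := j.isLt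
    rcases lt_trichotomy (p₀ i) (p₀ j) with hc | hc | hc
    · exfalso
      have := (enc_lt (n := n) (a := p₀ i) (b := p₀ j)
        (r := n - 1 - (i : ℕ)) (r' := n - 1 - (j : ℕ)) (by omega) (by omega)).mpr (Or.inl hc)
      exact absurd h (Nat.ne_of_lt this)
    · rw [hc] at h
      have hij : (i : ℕ) = (j : ℕ) := by omega
      exact Fin.ext hij
    · exfalso
      have := (enc_lt (n := n) (a := p₀ j) (b := p₀ i)
        (r := n - 1 - (j : ℕ)) (r' := n - 1 - (i : ℕ)) (by omega) (by omega)).mpr (Or.inl hc)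
      exact absurd h.symm (Nat.ne_of_lt this)
  have hstrict : StrictMono (key ∘ σ) :=
    hmono.strictMono_of_injective (hkeyinj.comp σ.injective)
  have hkey : ∀ (k l : ℕ) (hk : k < n) (hl : l < n), k < l →
      p₀ (σ ⟨k, hk⟩) < p₀ (σ ⟨l, hl⟩) ∨
      (p₀ (σ ⟨k, hk⟩) = p₀ (σ ⟨l, hl⟩) ∧ sv σ l < sv σ k) := by
    intro k l hk hl hkl
    have h := hstrict (show (⟨k, hk⟩ : Fin n) < ⟨l, hl⟩ from hkl)
    simp only [Function.comp_apply, hkeydef] at h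
    have hik := (σ ⟨k, hk⟩).isLt
    have hil := (σ ⟨l, hl⟩).isLt
    have h2 := (enc_lt (n := n) (a := p₀ (σ ⟨k, hk⟩)) (b := p₀ (σ ⟨l, hl⟩))
      (r := n - 1 - ((σ ⟨k, hk⟩ : Fin n) : ℕ)) (r' := n - 1 - ((σ ⟨l, hl⟩ : Fin n) : ℕ))
      (by omega) (by omega)).mp h
    rcases h2 with hc | ⟨hc1, hc2⟩
    · exact Or.inl hc
    · refine Or.inr ⟨hc1, ?_⟩
      have e1 : sv σ k = ((σ ⟨k, hk⟩ : Fin n) : ℕ) := by simp [sv, hk]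
      have e2 : sv σ l = ((σ ⟨l, hl⟩ : Fin n) : ℕ) := by simp [sv, hl]
      omega
  -- p₀ is itself of the standard form
  have hp₀eq : p₀ = pfun x σ (plat σ p₀) :=
    rep_eq x σ hx p₀ p₀ hkey rfl hp₀prim
  have hplat₀sub : plat σ p₀ ⊆ Finset.range (n - 1) := Finset.filter_subset _ _
  have hx1 : 1 ≤ x 1 := by
    have h0 : (0 : ℕ) < n := hn
    have h1 := hp₀prim.1.1 (σ ⟨0, h0⟩)
    rw [hp₀eq, pfun_apply x σ (plat σ p₀) h0] at h1
    simpa [st] using h1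
  have hstar : ∀ (k : ℕ) (h : k < n), f (σ ⟨k, h⟩) ≤ x (k + 1) := by
    intro k hk
    have h1 : f (σ ⟨k, hk⟩) ≤ p₀ (σ ⟨k, hk⟩) := hp₀ge _
    rw [hp₀eq, pfun_apply x σ (plat σ p₀) hk] at h1
    have h2 := st_le (plat σ p₀) k
    exact h1.trans (xle hx (by omega) (by omega))
  -- the descent set
  set A : Finset ℕ := (Finset.range (n - 1)).filter (fun a => sv σ (a + 1) < sv σ a)
    with hAdef
  have hAsub : A ⊆ Finset.range (n - 1) := Finset.filter_subset _ _
  have hdescA : ∀ (S : Finset ℕ), S ⊆ A →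
      ∀ a ∈ S, a + 1 < n ∧ sv σ (a + 1) < sv σ a := by
    intro S hS a ha
    have := hS ha
    rw [hAdef, Finset.mem_filter, Finset.mem_range] at this
    exact ⟨by omega, this.2⟩
  -- the parametrizing finset
  set Pfin : Finset (Fin n → ℕ) := A.powerset.image (fun S => pfun x σ S) with hPfindef
  have hPset : {p : Fin n → ℕ |
      IsPrimitive x p ∧ (∀ i, f i ≤ p i) ∧ inversions p = I} = ↑Pfin := by
    ext p
    simp only [Set.mem_setOf_eq, hPfindef, Finset.coe_image, Set.mem_image,
      Finset.mem_coe, Finset.mem_powerset]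
    constructor
    · rintro ⟨hprim, hge, hinv⟩
      have hI' : inversions p = inversions p₀ := hinv.trans hp₀inv.symm
      refine ⟨plat σ p, ?_, (rep_eq x σ hx p₀ p hkey hI' hprim).symm⟩
      intro a ha
      have hd := rep_desc σ p₀ p hkey hI' a ha
      rw [plat, Finset.mem_filter] at ha
      rw [hAdef, Finset.mem_filter]
      exact ⟨ha.1, hd.2⟩
    · rintro ⟨S, hSA, rfl⟩
      have hdesc := hdescA S hSA
      refine ⟨pfun_isPrimitive x σ S hx hx1 hn, ?_, ?_⟩
      · exact pfun_ge x σ S hx hdesc f hfMono hstar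
      · exact (pfun_inversions x σ S hx hdesc p₀ hkey).trans hp₀inv
  have hmemA : pfun x σ A ∈ {p : Fin n → ℕ |
      IsPrimitive x p ∧ (∀ i, f i ≤ p i) ∧ inversions p = I} := by
    rw [hPset]
    rw [Finset.mem_coe, hPfindef, Finset.mem_image]
    exact ⟨A, Finset.mem_powerset_self A, rfl⟩
  have hDA : D = A.card := by
    have h1 : pdim p₀ = (plat σ p₀).card := by
      conv_lhs => rw [hp₀eq]
      exact pfun_pdim x σ (plat σ p₀) hx hplat₀sub
    have h2 : plat σ p₀ ⊆ A := by
      intro a ha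
      have hd := rep_desc σ p₀ p₀ hkey rfl a ha
      rw [plat, Finset.mem_filter] at ha
      rw [hAdef, Finset.mem_filter]
      exact ⟨ha.1, hd.2⟩
    have h3 : (plat σ p₀).card ≤ A.card := Finset.card_le_card h2
    have h4 := hDmax _ hmemA
    rw [pfun_pdim x σ A hx hAsub] at h4
    omega
  have hinjOn : ∀ S ∈ A.powerset, ∀ S' ∈ A.powerset,
      pfun x σ S = pfun x σ S' → S = S' := by
    intro S hS S' hS' h
    rw [Finset.mem_powerset] at hS hS'
    exact pfun_injective x σ S hx S' (hS.trans hAsub) (hS'.trans hAsub) h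
  constructor
  · -- generating function
    rw [hPset, finsum_mem_coe_finset, hPfindef]
    rw [Finset.sum_image hinjOn]
    have hsum : ∀ S ∈ A.powerset,
        (Polynomial.X : Polynomial ℤ) ^ pdim (pfun x σ S)
          = (Polynomial.X : Polynomial ℤ) ^ S.card := by
      intro S hS
      rw [Finset.mem_powerset] at hS
      rw [pfun_pdim x σ S hx (hS.trans hAsub)]
    rw [Finset.sum_congr rfl hsum]
    have hprod := Finset.prod_add (fun _ : ℕ => (Polynomial.X : Polynomial ℤ))
      (fun _ : ℕ => (1 : Polynomial ℤ)) A
    simp only [Finset.prod_const, one_pow, mul_one] at hprod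
    rw [hDA, add_comm (1 : Polynomial ℤ) Polynomial.X]
    exact hprod.symm
  · -- counting
    intro j hj
    have hsetT : {p : Fin n → ℕ |
        (IsPrimitive x p ∧ (∀ i, f i ≤ p i) ∧ inversions p = I) ∧ pdim p = D - j}
        = ↑(Pfin.filter (fun p => pdim p = D - j)) := by
      ext p
      simp only [Set.mem_setOf_eq, Finset.coe_filter, Set.mem_setOf_eq]
      rw [← Finset.mem_coe, ← hPset]
      simp only [Set.mem_setOf_eq]
    have hcard1 : Nat.card {p : Fin n → ℕ //
        (IsPrimitive x p ∧ (∀ i, f i ≤ p i) ∧ inversions p = I) ∧ pdim p = D - j}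
        = (Pfin.filter (fun p => pdim p = D - j)).card := by
      calc Nat.card {p : Fin n → ℕ //
            (IsPrimitive x p ∧ (∀ i, f i ≤ p i) ∧ inversions p = I) ∧ pdim p = D - j}
          = ({p : Fin n → ℕ |
            (IsPrimitive x p ∧ (∀ i, f i ≤ p i) ∧ inversions p = I) ∧ pdim p = D - j}).ncard :=
            Nat.card_coe_set_eq _
        _ = (Pfin.filter (fun p => pdim p = D - j)).card := by
            rw [hsetT, Set.ncard_coe_finset]
    rw [hcard1]
    have himgfilter : Pfin.filter (fun p => pdim p = D - j)
        = (A.powerset.filter (fun S => (fun p => pdim p = D - j) (pfun x σ S))).image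
          (fun S => pfun x σ S) := by
      rw [hPfindef]
      exact Finset.filter_image
    rw [himgfilter]
    rw [Finset.card_image_of_injOn (fun S hS S' hS' h => hinjOn S
      (Finset.mem_of_mem_filter _ hS) S' (Finset.mem_of_mem_filter _ hS') h)]
    have hfiltercongr : A.powerset.filter (fun S => pdim (pfun x σ S) = D - j)
        = A.powerset.filter (fun S => S.card = D - j) := by
      apply Finset.filter_congr
      intro S hS
      rw [Finset.mem_powerset] at hS
      rw [pfun_pdim x σ S hx (hS.trans hAsub)]
    rw [hfiltercongr, ← Finset.powersetCard_eq_filter, Finset.card_powersetCard,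
      ← hDA, Nat.choose_symm hj]
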